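/- If I and J are d-Golod ideals of S = K[[x_1,...,x_n]] and d(I)·d(J) ⊆ I + J, then I + J is d-Golod: d(I+J)² ⊆ I + J. -/

import Mathlib

open Classical in
/-- The operator `d^r` on `K[[x_1,…,x_n]]`. -/
noncomputable def dOp {K : Type*} [Field K] {n : ℕ} (r : Fin n)
    (f : MvPowerSeries (Fin n) K) : MvPowerSeries (Fin n) K :=
  fun m => if (∀ i : Fin n, i < r → m i = 0)
    then MvPowerSeries.coeff (m + Finsupp.single r 1) f else 0

/-- For an ideal `L` of `K[[x_1,…,x_n]]`, `d(L)` is the ideal generated by all the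
elements `d^r(f)` with `f ∈ L` and `1 ≤ r ≤ n`. -/
noncomputable def dIdeal {K : Type*} [Field K] {n : ℕ}
    (L : Ideal (MvPowerSeries (Fin n) K)) : Ideal (MvPowerSeries (Fin n) K) :=
  Ideal.span {g | ∃ f ∈ L, ∃ r : Fin n, g = dOp r f}

lemma dOp_add {K : Type*} [Field K] {n : ℕ} (r : Fin n)
    (f g : MvPowerSeries (Fin n) K) : dOp r (f + g) = dOp r f + dOp r g := by
  funext m
  have hadd : (dOp r f + dOp r g) m = dOp r f m + dOp r g m := rfl
  rw [hadd]
  simp only [dOp]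
  by_cases h : ∀ i : Fin n, i < r → m i = 0
  · simp only [if_pos h, map_add]
  · simp [h]

lemma dIdeal_sup_le {K : Type*} [Field K] {n : ℕ}
    (I J : Ideal (MvPowerSeries (Fin n) K)) :
    dIdeal (I ⊔ J) ≤ dIdeal I ⊔ dIdeal J := by
  rw [dIdeal, Ideal.span_le]
  rintro g ⟨f, hf, r, rfl⟩
  obtain ⟨a, ha, b, hb, rfl⟩ := Submodule.mem_sup.mp hf
  rw [dOp_add]
  exact Submodule.add_mem_sup
    (Ideal.subset_span ⟨a, ha, r, rfl⟩) (Ideal.subset_span ⟨b, hb, r, rfl⟩)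

/-- If `I` and `J` are d-Golod ideals of `K[[x_1,…,x_n]]` (contained in the maximal
ideal) and `d(I)·d(J) ⊆ I + J`, then `I + J` is d-Golod: `d(I+J)² ⊆ I + J`. -/
theorem dGolod_sup {K : Type*} [Field K] {n : ℕ}
    (I J : Ideal (MvPowerSeries (Fin n) K))
    (hI : ∀ f ∈ I, MvPowerSeries.constantCoeff f = 0)
    (hJ : ∀ f ∈ J, MvPowerSeries.constantCoeff f = 0)
    (hIG : (dIdeal I) ^ 2 ≤ I) (hJG : (dIdeal J) ^ 2 ≤ J)
    (hIJ : dIdeal I * dIdeal J ≤ I + J) :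
    (dIdeal (I + J)) ^ 2 ≤ I + J := by
  have h1 : dIdeal (I + J) ≤ dIdeal I ⊔ dIdeal J := dIdeal_sup_le I J
  calc (dIdeal (I + J)) ^ 2 ≤ (dIdeal I ⊔ dIdeal J) * (dIdeal I ⊔ dIdeal J) := by
        rw [pow_two]; exact Ideal.mul_mono h1 h1
    _ ≤ I + J := by
        rw [Ideal.sup_mul, Ideal.mul_sup, Ideal.mul_sup]
        refine sup_le (sup_le ?_ ?_) (sup_le ?_ ?_)
        · exact le_trans (le_of_eq (pow_two _).symm) (le_trans hIG le_sup_left)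
        · exact hIJ
        · rw [mul_comm]; exact hIJ
        · exact le_trans (le_of_eq (pow_two _).symm) (le_trans hJG le_sup_right)
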